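/- Let ℓ ∈ [0,2], θ ∈ [0,π], φ = arccos(ℓ/2), and let e₁, e₂, e₃, e₄ be the edge vectors of P₄(ℓ,θ) (eᵢ = v_{i+1} − vᵢ, indices mod 4). Then the sum of the four angles between consecutive edges satisfies ∠(e₁,e₂) + ∠(e₂,e₃) + ∠(e₃,e₄) + ∠(e₄,e₁) = 2·arccos(−cos²φ − sin²φ·cos θ) + 4φ = 2·arccos(−ℓ²/4 − (1−ℓ²/4)·cos θ) + 2·arccos(ℓ²/2 − 1), where ∠(u,w) denotes the angle between nonzero vectors u and w in ℝ³ (the arccosine of their normalized inner product). -/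

import Mathlib

open Real

/-- The vertices of the equilateral spatial quadrilateral `P₄(ℓ,θ)` in `ℝ³`,
with `φ = arccos(ℓ/2)`:
`v₁ = (0,0,0)`, `v₂ = (cos φ, sin φ, 0)`, `v₃ = (2cos φ, 0, 0)`,
`v₄ = (cos φ, sin φ cos θ, sin φ sin θ)`. -/
noncomputable def vtx (ℓ θ : ℝ) : Fin 4 → EuclideanSpace ℝ (Fin 3) := fun k =>
  (WithLp.equiv 2 (Fin 3 → ℝ)).symm
    (![![0, 0, 0],
       ![Real.cos (Real.arccos (ℓ / 2)), Real.sin (Real.arccos (ℓ / 2)), 0],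
       ![2 * Real.cos (Real.arccos (ℓ / 2)), 0, 0],
       ![Real.cos (Real.arccos (ℓ / 2)),
         Real.sin (Real.arccos (ℓ / 2)) * Real.cos θ,
         Real.sin (Real.arccos (ℓ / 2)) * Real.sin θ]] k)

/-- The edge vectors `eᵢ = v_{i+1} − vᵢ` (indices mod 4) of `P₄(ℓ,θ)`. -/
noncomputable def edg (ℓ θ : ℝ) : Fin 4 → EuclideanSpace ℝ (Fin 3) := fun k =>
  vtx ℓ θ (k + 1) - vtx ℓ θ k

lemma edg_apply (ℓ θ : ℝ) :
    ∀ k i, edg ℓ θ k i =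
      ![![Real.cos (Real.arccos (ℓ/2)), Real.sin (Real.arccos (ℓ/2)), 0],
        ![Real.cos (Real.arccos (ℓ/2)), -Real.sin (Real.arccos (ℓ/2)), 0],
        ![-Real.cos (Real.arccos (ℓ/2)), Real.sin (Real.arccos (ℓ/2))*Real.cos θ,
          Real.sin (Real.arccos (ℓ/2))*Real.sin θ],
        ![-Real.cos (Real.arccos (ℓ/2)), -(Real.sin (Real.arccos (ℓ/2))*Real.cos θ),
          -(Real.sin (Real.arccos (ℓ/2))*Real.sin θ)]] k i := by
  intro k i
  fin_cases k <;> fin_cases i <;>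
    · simp only [edg, vtx, PiLp.sub_apply, WithLp.equiv_symm_apply, PiLp.toLp_apply, Fin.isValue,
        Fin.mk_zero, Fin.mk_one, show ((⟨2,by norm_num⟩ : Fin 4)) = 2 from rfl,
        show ((⟨3,by norm_num⟩ : Fin 4)) = 3 from rfl,
        show ((⟨2,by norm_num⟩ : Fin 3)) = 2 from rfl,
        show (0:Fin 4)+1 = 1 from rfl, show (1:Fin 4)+1 = 2 from rfl,
        show (2:Fin 4)+1 = 3 from rfl, show (3:Fin 4)+1 = 0 from rfl,
        Matrix.cons_val_zero, Matrix.cons_val_one, Matrix.head_cons,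
        Matrix.cons_val_two, Matrix.tail_cons, Matrix.cons_val_three]
      ring

/-- The total curvature of `P₄(ℓ,θ)`, i.e. the sum of the angles between
consecutive edge vectors, equals
`2 arccos(−cos²φ − sin²φ cos θ) + 4φ`, which in turn equals
`2 arccos(−ℓ²/4 − (1−ℓ²/4) cos θ) + 2 arccos(ℓ²/2 − 1)`. -/
theorem sum_angles_eq (ℓ θ : ℝ) (hℓ : ℓ ∈ Set.Icc (0 : ℝ) 2)
    (hθ : θ ∈ Set.Icc (0 : ℝ) Real.pi) :
    (∑ k : Fin 4, InnerProductGeometry.angle (edg ℓ θ k) (edg ℓ θ (k + 1)) =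
      2 * Real.arccos (-(Real.cos (Real.arccos (ℓ / 2))) ^ 2 -
          (Real.sin (Real.arccos (ℓ / 2))) ^ 2 * Real.cos θ) +
        4 * Real.arccos (ℓ / 2)) ∧
    (∑ k : Fin 4, InnerProductGeometry.angle (edg ℓ θ k) (edg ℓ θ (k + 1)) =
      2 * Real.arccos (-ℓ ^ 2 / 4 - (1 - ℓ ^ 2 / 4) * Real.cos θ) +
        2 * Real.arccos (ℓ ^ 2 / 2 - 1)) := by
  obtain ⟨hℓ0, hℓ2⟩ := hℓ
  set φ := Real.arccos (ℓ / 2) with hφdef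
  set c := Real.cos φ with hcdef
  set s := Real.sin φ with hsdef
  have hc : c = ℓ / 2 := Real.cos_arccos (by linarith) (by linarith)
  have hcs : c ^ 2 + s ^ 2 = 1 := by
    rw [hcdef, hsdef, add_comm]; exact Real.sin_sq_add_cos_sq φ
  have hφ0 : 0 ≤ φ := Real.arccos_nonneg _
  have hφle : φ ≤ π / 2 := by
    rw [hφdef, Real.arccos_le_pi_div_two]; linarith
  -- inner products
  have hinner : ∀ k : Fin 4, (inner ℝ (edg ℓ θ k) (edg ℓ θ (k + 1)) : ℝ) =
      ![c ^ 2 - s ^ 2, -c ^ 2 - s ^ 2 * Real.cos θ, c ^ 2 - s ^ 2,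
        -c ^ 2 - s ^ 2 * Real.cos θ] k := by
    intro k
    rw [PiLp.inner_apply]
    fin_cases k <;>
      · rw [Fin.sum_univ_three]
        simp only [edg_apply, RCLike.inner_apply, starRingEnd_apply, star_trivial,
          show (0:Fin 4)+1 = 1 from rfl, show (1:Fin 4)+1 = 2 from rfl,
          show (2:Fin 4)+1 = 3 from rfl, show (3:Fin 4)+1 = 0 from rfl,
          Fin.mk_zero, Fin.mk_one, Fin.isValue,
          show ((⟨2,by norm_num⟩ : Fin 4)) = 2 from rfl,
          show ((⟨3,by norm_num⟩ : Fin 4)) = 3 from rfl,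
          Matrix.cons_val_zero, Matrix.cons_val_one, Matrix.head_cons,
          Matrix.cons_val_two, Matrix.tail_cons, Matrix.cons_val_three]
        rw [← hcdef, ← hsdef]
        nlinarith [Real.sin_sq_add_cos_sq θ, sq_nonneg s, sq_nonneg c]
  -- norms
  have hnorm : ∀ k : Fin 4, ‖edg ℓ θ k‖ = 1 := by
    intro k
    rw [EuclideanSpace.norm_eq]
    have : ∑ i, ‖edg ℓ θ k i‖ ^ 2 = 1 := by
      fin_cases k <;>
        · rw [Fin.sum_univ_three]
          simp only [edg_apply, Real.norm_eq_abs, sq_abs,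
            Fin.mk_zero, Fin.mk_one, Fin.isValue,
            show ((⟨2,by norm_num⟩ : Fin 4)) = 2 from rfl,
            show ((⟨3,by norm_num⟩ : Fin 4)) = 3 from rfl,
            Matrix.cons_val_zero, Matrix.cons_val_one, Matrix.head_cons,
            Matrix.cons_val_two, Matrix.tail_cons, Matrix.cons_val_three]
          rw [← hcdef, ← hsdef]
          nlinarith [Real.sin_sq_add_cos_sq θ, hcs]
    rw [this, Real.sqrt_one]
  -- angles
  have hang : ∀ k : Fin 4, InnerProductGeometry.angle (edg ℓ θ k) (edg ℓ θ (k + 1)) =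
      Real.arccos (![c ^ 2 - s ^ 2, -c ^ 2 - s ^ 2 * Real.cos θ, c ^ 2 - s ^ 2,
        -c ^ 2 - s ^ 2 * Real.cos θ] k) := by
    intro k
    rw [InnerProductGeometry.angle, hnorm, hnorm, mul_one, div_one, hinner]
  have harc : Real.arccos (c ^ 2 - s ^ 2) = 2 * φ := by
    have h1 : c ^ 2 - s ^ 2 = Real.cos (2 * φ) := by
      rw [Real.cos_two_mul, ← hcdef]; nlinarith [hcs]
    rw [h1, Real.arccos_cos (by linarith) (by linarith)]
  have hsum : ∑ k : Fin 4, InnerProductGeometry.angle (edg ℓ θ k) (edg ℓ θ (k + 1)) =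
      2 * Real.arccos (-c ^ 2 - s ^ 2 * Real.cos θ) + 4 * φ := by
    rw [Fin.sum_univ_four, hang 0, hang 1, hang 2, hang 3]
    simp only [Matrix.cons_val_zero, Matrix.cons_val_one, Matrix.head_cons,
      Matrix.cons_val_two, Matrix.tail_cons, Matrix.cons_val_three]
    rw [harc]; ring
  constructor
  · exact hsum
  · rw [hsum]
    have hs2 : s ^ 2 = 1 - ℓ ^ 2 / 4 := by rw [← hcs, hc]; ring
    have hc2 : c ^ 2 = ℓ ^ 2 / 4 := by rw [hc]; ring
    have h4φ : 4 * φ = 2 * Real.arccos (ℓ ^ 2 / 2 - 1) := by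
      have : ℓ ^ 2 / 2 - 1 = Real.cos (2 * φ) := by
        rw [Real.cos_two_mul, ← hcdef, hc]; ring
      rw [this, Real.arccos_cos (by linarith) (by linarith)]; ring
    rw [hc2, hs2, h4φ]
    ring_nf
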